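/- If P, Q ∈ ℤ³ are vertices of an equilateral triangle O, P, Q with O the origin, then the squared side length ‖P‖² is an even integer. -/

import Mathlib

/-- Casting a vector of integers to a point of `ℝ³` (with the Euclidean structure). -/
noncomputable def intVec (v : Fin 3 → ℤ) : EuclideanSpace ℝ (Fin 3) :=
  (WithLp.equiv 2 (Fin 3 → ℝ)).symm fun i => (v i : ℝ)

/-- If `O = 0, P, Q` are the vertices of an equilateral triangle with `P, Q ∈ ℤ³`, then the
squared side length `‖P‖² = P₀² + P₁² + P₂²` is even. -/
theorem sq_side_even_of_integer_equilateral_triangle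
    (P Q : Fin 3 → ℤ) (hP : P ≠ 0) (hQ : Q ≠ 0) (hPQ : P ≠ Q)
    (h1 : ‖intVec P‖ = ‖intVec Q‖)
    (h2 : ‖intVec Q‖ = ‖intVec P - intVec Q‖) :
    Even (P 0 ^ 2 + P 1 ^ 2 + P 2 ^ 2) := by
  have key : ‖intVec P‖ ^ 2 = 2 * (inner ℝ (intVec P) (intVec Q) : ℝ) := by
    have h3 : ‖intVec P‖ ^ 2 = ‖intVec P - intVec Q‖ ^ 2 := by rw [h1, h2]
    rw [norm_sub_sq_real] at h3
    rw [← h1] at h3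
    linarith
  have hnorm : ‖intVec P‖ ^ 2 = ((P 0 ^ 2 + P 1 ^ 2 + P 2 ^ 2 : ℤ) : ℝ) := by
    rw [← real_inner_self_eq_norm_sq]
    simp [intVec, PiLp.inner_apply, Fin.sum_univ_three, EuclideanSpace.norm_sq_eq]
  have hinner : (inner ℝ (intVec P) (intVec Q) : ℝ) =
      ((P 0 * Q 0 + P 1 * Q 1 + P 2 * Q 2 : ℤ) : ℝ) := by
    simp [intVec, PiLp.inner_apply, Fin.sum_univ_three]
    ring
  rw [hnorm, hinner] at key
  have : (P 0 ^ 2 + P 1 ^ 2 + P 2 ^ 2 : ℤ) = 2 * (P 0 * Q 0 + P 1 * Q 1 + P 2 * Q 2) := by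
    exact_mod_cast key
  exact ⟨P 0 * Q 0 + P 1 * Q 1 + P 2 * Q 2, by linarith⟩
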